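/- Assume γψ>1. For every c>0 and every ν ∈ ℝ with (δθ−ν)/(θ−1)>0, the infimum F(c,ν) := inf { f(c,u) + ν·u : u ∈ ℝ, (1−γ)u>0 } is attained and equals δ^θ · (c^{1−γ}/(1−γ)) · ((δθ−ν)/(θ−1))^{1−θ}. -/

import Mathlib

open Real

/-- Tangent-line (Bernoulli) inequality for nonpositive exponents. -/
lemma bern_nonpos_aux {t p : ℝ} (ht : 0 < t) (hp : p ≤ 0) :
    1 + p * (t - 1) ≤ t ^ p := by
  have h1 : Real.log t * p + 1 ≤ Real.exp (Real.log t * p) := Real.add_one_le_exp _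
  have h2 : Real.log t ≤ t - 1 := Real.log_le_sub_one_of_pos ht
  rw [Real.rpow_def_of_pos ht]
  nlinarith [mul_nonneg (neg_nonneg.2 hp) (sub_nonneg.2 h2)]

set_option maxHeartbeats 1000000 in
/-- Assume `γψ > 1`. For every `c > 0` and every `ν` with `(δθ−ν)/(θ−1) > 0`,
the infimum `F(c,ν) = inf { f(c,u) + νu : (1−γ)u > 0 }` is attained and equals
`δ^θ (c^{1−γ}/(1−γ)) ((δθ−ν)/(θ−1))^{1−θ}`. -/
theorem epsteinZin_felicity_isLeast
    (δ γ ψ θ : ℝ) (hδ : 0 < δ) (hγ : 0 < γ) (hγ1 : γ ≠ 1)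
    (hψ : 0 < ψ) (hψ1 : ψ ≠ 1) (hθ : θ = (1 - γ) / (1 - 1 / ψ))
    (hγψ : 1 < γ * ψ)
    (c ν : ℝ) (hc : 0 < c) (hν : 0 < (δ * θ - ν) / (θ - 1)) :
    IsLeast
      {y : ℝ | ∃ u : ℝ, 0 < (1 - γ) * u ∧
        y = δ * (c ^ (1 - 1 / ψ) / (1 - 1 / ψ)) * ((1 - γ) * u) ^ (1 - 1 / θ)
              - δ * θ * u + ν * u}
      (δ ^ θ * (c ^ (1 - γ) / (1 - γ)) * ((δ * θ - ν) / (θ - 1)) ^ (1 - θ)) := by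
  have hψ0 : ψ ≠ 0 := hψ.ne'
  have hγ0 : (1:ℝ) - γ ≠ 0 := sub_ne_zero.mpr (Ne.symm hγ1)
  set a := 1 - 1/ψ with ha_def
  have hψ1' : 1/ψ ≠ 1 := by
    intro h
    apply hψ1
    field_simp at h
    linarith
  have ha0 : a ≠ 0 := by
    rw [ha_def]
    exact sub_ne_zero.mpr (Ne.symm hψ1')
  have hθa : θ * a = 1 - γ := by rw [hθ]; exact div_mul_cancel₀ _ ha0
  have hθ0 : θ ≠ 0 := by
    intro h
    rw [h, zero_mul] at hθa
    exact hγ0 hθa.symm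
  have haψ : a * ψ = ψ - 1 := by rw [ha_def]; field_simp
  have hθm1 : (θ - 1) * (ψ - 1) = 1 - γ * ψ := by
    linear_combination ψ * hθa - θ * haψ
  set p := 1 - 1/θ with hp_def
  have hθp : θ * p = θ - 1 := by
    rw [hp_def, mul_sub, mul_one, mul_one_div, div_self hθ0]
  -- sign facts
  have hsign : (0 < a ∧ θ - 1 < 0 ∧ (p ≤ 0 ∨ 1 ≤ p)) ∨
      (a < 0 ∧ 0 < θ - 1 ∧ 0 ≤ p ∧ p ≤ 1) := by
    rcases lt_or_gt_of_ne hψ1 with h | h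
    · right
      have h1ψ : 1 < 1/ψ := by rw [lt_div_iff₀ hψ]; linarith
      have ha : a < 0 := by rw [ha_def]; linarith
      have hθ1 : 0 < θ - 1 := by nlinarith
      have hθpos : 0 < θ := by linarith
      refine ⟨ha, hθ1, ?_, ?_⟩
      · rw [hp_def]
        have : 1/θ ≤ 1 := by rw [div_le_one hθpos]; linarith
        linarith
      · rw [hp_def]
        have : 0 < 1/θ := by positivity
        linarith
    · left
      have h1ψ : 1/ψ < 1 := by rw [div_lt_one hψ]; linarith
      have ha : 0 < a := by rw [ha_def]; linarith
      have hθ1 : θ - 1 < 0 := by nlinarith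
      refine ⟨ha, hθ1, ?_⟩
      rcases lt_trichotomy θ 0 with ht | ht | ht
      · right
        rw [hp_def]
        have : 1/θ < 0 := one_div_neg.mpr ht
        linarith
      · exact absurd ht hθ0
      · left
        rw [hp_def]
        have : 1 < 1/θ := by rw [lt_div_iff₀ ht]; linarith
        linarith
  have hθ1ne : θ - 1 ≠ 0 := by
    rcases hsign with ⟨_, h, _⟩ | ⟨_, h, _⟩
    · exact h.ne
    · exact h.ne'
  set k := (δ * θ - ν)/(θ - 1) with hk_def
  have hk : 0 < k := hν
  have hk0 : k ≠ 0 := hk.ne'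
  have hkθ : δ * θ - ν = k * (θ - 1) := by rw [hk_def]; field_simp
  have hca : 0 < c ^ a := rpow_pos_of_pos hc a
  have hD : 0 < δ * c ^ a := mul_pos hδ hca
  have hDk : 0 < δ * c ^ a / k := div_pos hD hk
  set m := (δ * c ^ a / k) ^ θ with hm_def
  have hm : 0 < m := rpow_pos_of_pos hDk θ
  have hmp : m ^ p = (δ * c ^ a / k) ^ (θ - 1) := by
    rw [hm_def, ← Real.rpow_mul hDk.le, hθp]
  have hE : (δ * c ^ a / k) ^ (θ - 1) = (δ * c ^ a) ^ (θ - 1) * k ^ (1 - θ) := by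
    rw [Real.div_rpow hD.le hk.le, show (1 - θ) = -(θ - 1) by ring,
      Real.rpow_neg hk.le, div_eq_mul_inv]
  have hDθ : (δ * c ^ a) * (δ * c ^ a) ^ (θ - 1) = δ ^ θ * c ^ (1 - γ) := by
    have h1 : (δ * c ^ a) ^ (1 + (θ - 1)) = (δ * c ^ a) ^ (1:ℝ) * (δ * c ^ a) ^ (θ - 1) :=
      Real.rpow_add hD 1 (θ - 1)
    rw [Real.rpow_one] at h1
    rw [← h1, show 1 + (θ - 1) = θ by ring, Real.mul_rpow hδ.le hca.le,
      ← Real.rpow_mul hc.le, mul_comm a θ, hθa]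
  have hmm : m = (δ * c ^ a / k) ^ (θ - 1) * (δ * c ^ a / k) := by
    have h1 : (δ * c ^ a / k) ^ ((θ - 1) + 1) =
        (δ * c ^ a / k) ^ (θ - 1) * (δ * c ^ a / k) ^ (1:ℝ) := Real.rpow_add hDk _ _
    rw [Real.rpow_one] at h1
    rw [hm_def, ← h1]
    congr 1
    ring
  have hkm : k * m = (δ * c ^ a) * m ^ p := by
    rw [hmp, hmm]
    field_simp
  have hDP : (δ * c ^ a) * m ^ p = δ ^ θ * c ^ (1 - γ) * k ^ (1 - θ) := by
    rw [hmp, hE, ← mul_assoc, hDθ]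
  have h2 : (δ * θ - ν) * m = (θ - 1) * (δ * c ^ a * m ^ p) := by
    rw [hkθ]
    linear_combination (θ - 1) * hkm
  have h3 : (δ * θ - ν) * m = θ * p * (δ * c ^ a * m ^ p) := by
    rw [h2, hθp]
  have claimA : δ * (c ^ a / a) * m ^ p - δ * θ * (m / (1 - γ)) + ν * (m / (1 - γ))
      = δ ^ θ * (c ^ (1 - γ) / (1 - γ)) * k ^ (1 - θ) := by
    calc δ * (c ^ a / a) * m ^ p - δ * θ * (m / (1 - γ)) + ν * (m / (1 - γ))
        = (δ * c ^ a * m ^ p) / a - ((δ * θ - ν) * m) / (1 - γ) := by ring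
      _ = (δ * c ^ a * m ^ p) / a - ((θ - 1) * (δ * c ^ a * m ^ p)) / (1 - γ) := by rw [h2]
      _ = (δ * c ^ a * m ^ p) / (1 - γ) := by
          rw [← hθa]
          field_simp
          ring
      _ = δ ^ θ * (c ^ (1 - γ) / (1 - γ)) * k ^ (1 - θ) := by rw [hDP]; ring
  have claimB : ∀ x : ℝ, 0 < x →
      δ ^ θ * (c ^ (1 - γ) / (1 - γ)) * k ^ (1 - θ) ≤
      δ * (c ^ a / a) * x ^ p - δ * θ * (x / (1 - γ)) + ν * (x / (1 - γ)) := by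
    intro x hx
    set s := x / m - 1 with hs_def
    have hs1 : (0:ℝ) < 1 + s := by
      have := div_pos hx hm
      rw [hs_def]; linarith
    have hs : (-1:ℝ) ≤ s := by linarith
    have hxm : x = m * (1 + s) := by rw [hs_def]; field_simp; ring
    have hxp : x ^ p = m ^ p * (1 + s) ^ p := by
      rw [hxm, Real.mul_rpow hm.le hs1.le]
    have hkey : δ * (c ^ a / a) * x ^ p - δ * θ * (x / (1 - γ)) + ν * (x / (1 - γ))
        - (δ * (c ^ a / a) * m ^ p - δ * θ * (m / (1 - γ)) + ν * (m / (1 - γ)))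
        = (δ * c ^ a * m ^ p / a) * ((1 + s) ^ p - (1 + p * s)) := by
      calc δ * (c ^ a / a) * x ^ p - δ * θ * (x / (1 - γ)) + ν * (x / (1 - γ))
          - (δ * (c ^ a / a) * m ^ p - δ * θ * (m / (1 - γ)) + ν * (m / (1 - γ)))
          = (δ * c ^ a * m ^ p * ((1 + s) ^ p - 1)) / a
              - ((δ * θ - ν) * m) * s / (1 - γ) := by rw [hxp, hxm]; ring
        _ = (δ * c ^ a * m ^ p * ((1 + s) ^ p - 1)) / a
              - (θ * p * (δ * c ^ a * m ^ p)) * s / (1 - γ) := by rw [h3]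
        _ = (δ * c ^ a * m ^ p / a) * ((1 + s) ^ p - (1 + p * s)) := by
            rw [← hθa]
            field_simp
            ring
    have hineq : 0 ≤ (δ * c ^ a * m ^ p / a) * ((1 + s) ^ p - (1 + p * s)) := by
      rcases hsign with ⟨ha, _, hpc⟩ | ⟨ha, _, hp0, hp1⟩
      · have hb : 1 + p * s ≤ (1 + s) ^ p := by
          rcases hpc with hp | hp
          · have h := bern_nonpos_aux hs1 hp
            rw [add_sub_cancel_left] at h
            exact h
          · exact one_add_mul_self_le_rpow_one_add hs hp
        have hc1 : 0 ≤ δ * c ^ a * m ^ p / a :=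
          (div_pos (by positivity) ha).le
        exact mul_nonneg hc1 (by linarith)
      · have hb : (1 + s) ^ p ≤ 1 + p * s :=
          rpow_one_add_le_one_add_mul_self hs hp0 hp1
        have hc1 : δ * c ^ a * m ^ p / a ≤ 0 :=
          div_nonpos_of_nonneg_of_nonpos (by positivity) ha.le
        have h4 := mul_nonneg (neg_nonneg.2 hc1)
          (neg_nonneg.2 (by linarith : (1 + s) ^ p - (1 + p * s) ≤ 0))
        nlinarith [h4]
    linarith
  have hmul : (1 - γ) * (m / (1 - γ)) = m := by field_simp
  constructor
  · refine ⟨m / (1 - γ), ?_, ?_⟩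
    · rw [hmul]; exact hm
    · rw [hmul]; exact claimA.symm
  · rintro y ⟨u, hu, rfl⟩
    have h := claimB ((1 - γ) * u) hu
    rwa [mul_div_cancel_left₀ u hγ0] at h
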